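/- arXiv:2203.16713 — 2 statements merged into one kernel-verified Lean document; each statement's English description precedes it below -/
import Mathlib

section
/- In the set-cover Wordle reduction, if every subfamily of F of size at most c leaves at least two elements of U uncovered, then after any sequence of c guesses from the dictionary D_F, there remain at least two feasible element-words; specifically, if F_sets is the collection of sets whose set-words were guessed and F_elem the singletons of guessed element-words, then any element-word w_u with u ∉ ⋃(F_sets ∪ F_elem) is feasible, and at least two such u exist. -/
/-- The element-word `w_{u_i}`: symbol `1` at position `i`, symbol `s_i = i + 2` elsewhere
(alphabet `Fin (n+2)` with `⊥ = 0`, `1 = 1`, `s_i = i + 2`). -/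
def elemWord (n : ℕ) (i : Fin n) : Fin n → Fin (n + 2) :=
  fun j => if j = i then 1 else ⟨i.val + 2, by omega⟩

/-- The set-word `w_S`: symbol `1` at positions in `S`, symbol `⊥ = 0` elsewhere. -/
def setWord (n : ℕ) (S : Finset (Fin n)) : Fin n → Fin (n + 2) :=
  fun j => if j ∈ S then 1 else 0

/-- The dictionary `D_F`: all element-words and all set-words. -/
def DF (n : ℕ) (F : Finset (Finset (Fin n))) : Finset (Fin n → Fin (n + 2)) :=
  Finset.univ.image (elemWord n) ∪ F.image (setWord n)

/-- Wordle feedback: green positions, and per letter the number of yellow marks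
(the standard marking rule yields, per letter, the `min` of its non-green multiplicities
in the guess and in the secret). -/
def feedback {k : ℕ} {V : Type*} [DecidableEq V] (p w : Fin k → V) :
    (Fin k → Bool) × (V → ℕ) :=
  ⟨fun i => decide (p i = w i),
   fun a => min ((Finset.univ.filter (fun i => p i = a ∧ p i ≠ w i)).card)
                ((Finset.univ.filter (fun i => w i = a ∧ p i ≠ w i)).card)⟩

def shiftSym {n : ℕ} (i : Fin n) : Fin (n + 2) := ⟨i.val + 2, by omega⟩

lemma elemWord_apply_self (n : ℕ) (i : Fin n) : elemWord n i i = 1 := by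
  simp [elemWord]

lemma elemWord_apply_ne (n : ℕ) {i j : Fin n} (h : j ≠ i) :
    elemWord n i j = shiftSym i := by
  simp [elemWord, shiftSym, h]

lemma one_ne_shift (n : ℕ) (i : Fin n) : (1 : Fin (n + 2)) ≠ shiftSym i := by
  have h : (1 : Fin (n + 2)).val = 1 := rfl
  simp [shiftSym, Fin.ext_iff, h]

lemma zero_ne_shift (n : ℕ) (i : Fin n) : (0 : Fin (n + 2)) ≠ shiftSym i := by
  have h : (0 : Fin (n + 2)).val = 0 := rfl
  simp [shiftSym, Fin.ext_iff, h]

lemma fzero_ne_one (n : ℕ) : (0 : Fin (n + 2)) ≠ 1 := by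
  have h0 : (0 : Fin (n + 2)).val = 0 := rfl
  have h1 : (1 : Fin (n + 2)).val = 1 := rfl
  simp [Fin.ext_iff, h0, h1]

lemma shift_inj (n : ℕ) {i j : Fin n}
    (h : (shiftSym i : Fin (n + 2)) = shiftSym j) : i = j := by
  simp only [shiftSym, Fin.ext_iff] at h ⊢
  omega

lemma elemWord_eq_one_iff (n : ℕ) (i j : Fin n) : elemWord n i j = 1 ↔ j = i := by
  constructor
  · intro h
    by_contra hne
    rw [elemWord_apply_ne n hne] at h
    exact one_ne_shift n i h.symm
  · rintro rfl; exact elemWord_apply_self n _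

lemma elemWord_injective (n : ℕ) : Function.Injective (elemWord n) := by
  intro i j h
  have := congrFun h i
  rw [elemWord_apply_self] at this
  exact (elemWord_eq_one_iff n j i).mp this.symm

lemma setWord_injective (n : ℕ) : Function.Injective (setWord n) := by
  intro S T h
  ext j
  have := congrFun h j
  constructor <;> intro hj
  · by_contra hT
    rw [setWord, setWord, if_pos hj, if_neg hT] at this
    exact fzero_ne_one n this.symm
  · by_contra hS
    rw [setWord, setWord, if_neg hS, if_pos hj] at this
    exact fzero_ne_one n this

lemma setWord_ne_elemWord (n : ℕ) (hn : 2 ≤ n) (S : Finset (Fin n)) (i : Fin n) :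
    setWord n S ≠ elemWord n i := by
  intro h
  obtain ⟨j, hj⟩ : ∃ j : Fin n, j ≠ i := by
    rcases Finset.exists_mem_ne (s := (Finset.univ : Finset (Fin n)))
      (by simp; omega) i with ⟨j, _, hj⟩
    exact ⟨j, hj⟩
  have := congrFun h j
  rw [elemWord_apply_ne n hj] at this
  by_cases hjS : j ∈ S
  · simp [setWord, hjS] at this
    exact one_ne_shift n i this
  · simp [setWord, hjS] at this
    exact zero_ne_shift n i this

/-- Feedback of a set-word guess against the element-word of an element not in the set. -/
lemma feedback_setWord (n : ℕ) (S : Finset (Fin n)) {u : Fin n} (hu : u ∉ S) :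
    feedback (setWord n S) (elemWord n u) =
      ⟨fun _ => false, fun a => if a = 1 then min S.card 1 else 0⟩ := by
  have hne : ∀ j, setWord n S j ≠ elemWord n u j := by
    intro j h
    by_cases hj : j ∈ S
    · have hju : j ≠ u := by rintro rfl; exact hu hj
      rw [elemWord_apply_ne n hju] at h
      simp [setWord, hj] at h
      exact one_ne_shift n u h
    · by_cases hju : j = u
      · subst hju
        rw [elemWord_apply_self] at h
        simp [setWord, hj] at h
      · rw [elemWord_apply_ne n hju] at h
        simp [setWord, hj] at h
        exact zero_ne_shift n u h
  unfold feedback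
  refine Prod.ext ?_ ?_
  · funext i
    simpa using hne i
  · funext a
    simp only
    by_cases ha1 : a = 1
    · subst ha1
      have h1 : (Finset.univ.filter (fun i => setWord n S i = 1 ∧ setWord n S i ≠ elemWord n u i))
          = S := by
        ext j
        simp only [Finset.mem_filter, Finset.mem_univ, true_and]
        constructor
        · rintro ⟨h, -⟩
          by_contra hj
          simp [setWord, hj] at h
        · intro hj
          exact ⟨by simp [setWord, hj], hne j⟩
      have h2 : (Finset.univ.filter
          (fun i => elemWord n u i = 1 ∧ setWord n S i ≠ elemWord n u i)) = {u} := by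
        ext j
        simp only [Finset.mem_filter, Finset.mem_univ, true_and, Finset.mem_singleton]
        constructor
        · rintro ⟨h, -⟩
          exact (elemWord_eq_one_iff n u j).mp h
        · rintro rfl
          exact ⟨elemWord_apply_self n _, hne _⟩
      rw [h1, h2]
      simp
    · simp only [ha1, if_false]
      by_cases ha0 : a = 0
      · subst ha0
        have h2 : (Finset.univ.filter
            (fun i => elemWord n u i = 0 ∧ setWord n S i ≠ elemWord n u i)) = ∅ := by
          ext j
          simp only [Finset.mem_filter, Finset.mem_univ, true_and, Finset.notMem_empty,
            iff_false, not_and]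
          intro h
          exfalso
          by_cases hj : j = u
          · subst hj; rw [elemWord_apply_self] at h; exact fzero_ne_one n h.symm
          · rw [elemWord_apply_ne n hj] at h; exact zero_ne_shift n u h.symm
        rw [h2]
        simp
      · have h1 : (Finset.univ.filter
            (fun i => setWord n S i = a ∧ setWord n S i ≠ elemWord n u i)) = ∅ := by
          ext j
          simp only [Finset.mem_filter, Finset.mem_univ, true_and, Finset.notMem_empty,
            iff_false, not_and]
          intro h
          exfalso
          by_cases hj : j ∈ S
          · simp [setWord, hj] at h; exact ha1 h.symm
          · simp [setWord, hj] at h; exact ha0 h.symm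
        rw [h1]
        simp

/-- Feedback of an element-word guess against the element-word of a different element. -/
lemma feedback_elemWord (n : ℕ) {v u : Fin n} (huv : u ≠ v) :
    feedback (elemWord n v) (elemWord n u) =
      ⟨fun _ => false, fun a => if a = 1 then 1 else 0⟩ := by
  have hne : ∀ j, elemWord n v j ≠ elemWord n u j := by
    intro j h
    by_cases hjv : j = v
    · subst hjv
      rw [elemWord_apply_self, elemWord_apply_ne n huv.symm] at h
      exact one_ne_shift n u h
    · by_cases hju : j = u
      · subst hju
        rw [elemWord_apply_ne n hjv, elemWord_apply_self] at h
        exact one_ne_shift n v h.symm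
      · rw [elemWord_apply_ne n hjv, elemWord_apply_ne n hju] at h
        exact huv (shift_inj n h).symm
  unfold feedback
  refine Prod.ext ?_ ?_
  · funext i
    simpa using hne i
  · funext a
    simp only
    by_cases ha1 : a = 1
    · subst ha1
      have h1 : (Finset.univ.filter
          (fun i => elemWord n v i = 1 ∧ elemWord n v i ≠ elemWord n u i)) = {v} := by
        ext j
        simp only [Finset.mem_filter, Finset.mem_univ, true_and, Finset.mem_singleton]
        exact ⟨fun ⟨h, _⟩ => (elemWord_eq_one_iff n v j).mp h,
          by rintro rfl; exact ⟨elemWord_apply_self n _, hne _⟩⟩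
      have h2 : (Finset.univ.filter
          (fun i => elemWord n u i = 1 ∧ elemWord n v i ≠ elemWord n u i)) = {u} := by
        ext j
        simp only [Finset.mem_filter, Finset.mem_univ, true_and, Finset.mem_singleton]
        exact ⟨fun ⟨h, _⟩ => (elemWord_eq_one_iff n u j).mp h,
          by rintro rfl; exact ⟨elemWord_apply_self n _, hne _⟩⟩
      rw [h1, h2]
      simp
    · simp only [ha1, if_false]
      by_cases hav : a = shiftSym v
      · subst hav
        have h2 : (Finset.univ.filter (fun i => elemWord n u i = shiftSym v ∧
            elemWord n v i ≠ elemWord n u i)) = ∅ := by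
          ext j
          simp only [Finset.mem_filter, Finset.mem_univ, true_and, Finset.notMem_empty,
            iff_false, not_and]
          intro h
          exfalso
          by_cases hj : j = u
          · subst hj; rw [elemWord_apply_self] at h; exact one_ne_shift n v h
          · rw [elemWord_apply_ne n hj] at h; exact huv (shift_inj n h)
        rw [h2]
        simp
      · have h1 : (Finset.univ.filter (fun i => elemWord n v i = a ∧
            elemWord n v i ≠ elemWord n u i)) = ∅ := by
          ext j
          simp only [Finset.mem_filter, Finset.mem_univ, true_and, Finset.notMem_empty,
            iff_false, not_and]
          intro h
          exfalso
          by_cases hj : j = v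
          · subst hj; rw [elemWord_apply_self] at h; exact ha1 h.symm
          · rw [elemWord_apply_ne n hj] at h; exact hav h.symm
        rw [h1]
        simp

/-- if every subfamily of `F` of size at most `c` leaves at least two
elements uncovered, then after any sequence of at most `c` guesses from `D_F` there
remain two distinct uncovered, unguessed elements `u₁, u₂` whose element-words are
feasible and receive identical feedback on every guess, so the guesser cannot
distinguish them. -/
theorem two_feasible_element_words (n c : ℕ) (F : Finset (Finset (Fin n)))
    (hcover : ∀ u : Fin n, ∃ S ∈ F, u ∈ S)
    (hhard : ∀ K ⊆ F, K.card ≤ c → 2 ≤ ((Finset.univ : Finset (Fin n)) \ K.sup id).card)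
    (L : List (Fin n → Fin (n + 2))) (hL : ∀ p ∈ L, p ∈ DF n F) (hlen : L.length ≤ c) :
    ∃ u₁ u₂ : Fin n, u₁ ≠ u₂ ∧
      (∀ S ∈ F, setWord n S ∈ L → u₁ ∉ S ∧ u₂ ∉ S) ∧
      elemWord n u₁ ∉ L ∧ elemWord n u₂ ∉ L ∧
      ∀ p ∈ L, feedback p (elemWord n u₁) = feedback p (elemWord n u₂) := by
  classical
  -- n ≥ 2
  have hn : 2 ≤ n := by
    have := hhard ∅ (Finset.empty_subset F) (by simp)
    simpa using this
  -- choice of a covering set for each element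
  choose g hgF hgmem using hcover
  -- the guessed sets and guessed elements
  set A : Finset (Finset (Fin n)) := F.filter (fun S => setWord n S ∈ L) with hA
  set B : Finset (Fin n) := Finset.univ.filter (fun i => elemWord n i ∈ L) with hB
  set K : Finset (Finset (Fin n)) := A ∪ B.image g with hK
  have hKF : K ⊆ F := by
    intro S hS
    rcases Finset.mem_union.mp hS with h | h
    · exact (Finset.mem_filter.mp h).1
    · rcases Finset.mem_image.mp h with ⟨i, _, rfl⟩
      exact hgF i
  -- card bound
  have hcard : K.card ≤ c := by
    have h1 : (A.image (setWord n) ∪ B.image (elemWord n)) ⊆ L.toFinset := by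
      intro w hw
      rcases Finset.mem_union.mp hw with h | h
      · rcases Finset.mem_image.mp h with ⟨S, hS, rfl⟩
        exact List.mem_toFinset.mpr (Finset.mem_filter.mp hS).2
      · rcases Finset.mem_image.mp h with ⟨i, hi, rfl⟩
        exact List.mem_toFinset.mpr (Finset.mem_filter.mp hi).2
    have hdisj : Disjoint (A.image (setWord n)) (B.image (elemWord n)) := by
      rw [Finset.disjoint_left]
      intro w hw hw'
      rcases Finset.mem_image.mp hw with ⟨S, _, rfl⟩
      rcases Finset.mem_image.mp hw' with ⟨i, _, hi⟩
      exact setWord_ne_elemWord n hn S i hi.symm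
    have hAc : (A.image (setWord n)).card = A.card :=
      Finset.card_image_of_injective A (setWord_injective n)
    have hBc : (B.image (elemWord n)).card = B.card :=
      Finset.card_image_of_injective B (elemWord_injective n)
    have h2 : A.card + B.card ≤ L.toFinset.card := by
      rw [← hAc, ← hBc, ← Finset.card_union_of_disjoint hdisj]
      exact Finset.card_le_card h1
    calc K.card ≤ A.card + (B.image g).card := Finset.card_union_le _ _
      _ ≤ A.card + B.card := by
          exact Nat.add_le_add_left (Finset.card_image_le) _
      _ ≤ L.toFinset.card := h2
      _ ≤ L.length := L.toFinset_card_le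
      _ ≤ c := hlen
  -- two uncovered elements
  have h2card := hhard K hKF hcard
  obtain ⟨u₁, hu₁, u₂, hu₂, hne⟩ :=
    Finset.one_lt_card.mp (by omega : 1 < ((Finset.univ : Finset (Fin n)) \ K.sup id).card)
  have hout : ∀ u ∈ (Finset.univ : Finset (Fin n)) \ K.sup id, ∀ S ∈ K, u ∉ S := by
    intro u hu S hS hmem
    have := (Finset.mem_sdiff.mp hu).2
    exact this (Finset.mem_sup.mpr ⟨S, hS, hmem⟩)
  have hnotin : ∀ u ∈ (Finset.univ : Finset (Fin n)) \ K.sup id,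
      (∀ S ∈ F, setWord n S ∈ L → u ∉ S) ∧ elemWord n u ∉ L ∧
      (∀ i ∈ B, u ≠ i) := by
    intro u hu
    refine ⟨?_, ?_, ?_⟩
    · intro S hSF hSL
      exact hout u hu S (Finset.mem_union_left _ (Finset.mem_filter.mpr ⟨hSF, hSL⟩))
    · intro hEL
      have hiB : u ∈ B := Finset.mem_filter.mpr ⟨Finset.mem_univ u, hEL⟩
      exact hout u hu (g u) (Finset.mem_union_right _ (Finset.mem_image_of_mem g hiB))
        (hgmem u)
    · rintro i hi rfl
      exact hout u hu (g u) (Finset.mem_union_right _ (Finset.mem_image_of_mem g hi))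
        (hgmem u)
  obtain ⟨hS1, hE1, hB1⟩ := hnotin u₁ hu₁
  obtain ⟨hS2, hE2, hB2⟩ := hnotin u₂ hu₂
  refine ⟨u₁, u₂, hne, fun S hSF hSL => ⟨hS1 S hSF hSL, hS2 S hSF hSL⟩, hE1, hE2, ?_⟩
  intro p hp
  rcases Finset.mem_union.mp (hL p hp) with h | h
  · rcases Finset.mem_image.mp h with ⟨v, _, rfl⟩
    have hvB : v ∈ B := Finset.mem_filter.mpr ⟨Finset.mem_univ v, hp⟩
    rw [feedback_elemWord n (hB1 v hvB), feedback_elemWord n (hB2 v hvB)]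
  · rcases Finset.mem_image.mp h with ⟨S, hSF, rfl⟩
    rw [feedback_setWord n S (hS1 S hSF hp), feedback_setWord n S (hS2 S hSF hp)]
end

section
/- In the dominating-set Wordle reduction with dictionary D_G, for any two distinct vertices u and v of a graph G with no self-loops, the constant word w'_u = (u,u,u,u,u) shares a symbol with the guess w_v = (v, n₁, n₂, n₃, n₄) if and only if v dominates u (i.e., u = v or u is a neighbor of v). -/
/-- The word `w_v = (v, n₁, n₂, n₃, n₄)` listing `v` and its neighbors. -/
def wv {V : Type*} (nbr : V → Fin 4 → V) (v : V) : Fin 5 → V :=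
  fun i => Fin.cases v (fun j => nbr v j) i

/-- The constant word `w'_u = (u,u,u,u,u)`. -/
def wv' {V : Type*} (u : V) : Fin 5 → V := fun _ => u

/-- for distinct vertices `u ≠ v` of a simple graph, the constant word
`w'_u` shares a symbol with the guess `w_v = (v, n₁, n₂, n₃, n₄)` iff `v` dominates `u`
(i.e. `u = v` or `u` is a neighbor of `v`). -/
theorem shares_symbol_iff_dominates {V : Type*} [Fintype V] [DecidableEq V]
    (G : SimpleGraph V) [DecidableRel G.Adj] (nbr : V → Fin 4 → V)
    (hnbr : ∀ v, Finset.univ.image (nbr v) = G.neighborFinset v)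
    (u v : V) (huv : u ≠ v) :
    (∃ i : Fin 5, wv nbr v i = u) ↔ (u = v ∨ G.Adj v u) := by
  constructor
  · rintro ⟨i, hi⟩
    refine Or.inr ?_
    induction i using Fin.cases with
    | zero => exact absurd hi.symm huv
    | succ j =>
      have : u ∈ Finset.univ.image (nbr v) := by
        simp only [Finset.mem_image]
        exact ⟨j, Finset.mem_univ j, hi⟩
      rw [hnbr] at this
      simpa [SimpleGraph.mem_neighborFinset] using this
  · rintro (h | h)
    · exact absurd h huv
    · have : u ∈ Finset.univ.image (nbr v) := by
        rw [hnbr]; simpa [SimpleGraph.mem_neighborFinset] using h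
      simp only [Finset.mem_image] at this
      obtain ⟨j, _, hj⟩ := this
      exact ⟨j.succ, hj⟩
end
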